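/- arXiv:0809.3457 — 3 statements merged into one kernel-verified Lean document; each statement's English description precedes it below -/
import Mathlib

section
/- Let (X,d,μ) satisfy the n-dimensional growth condition with μ(X) < ∞, let K be a standard singular integral kernel with smoothness exponent γ, and let T_ε f(x) = ∫ η(d(x,y)/ε) K(x,y) f(y) dμ(y) be the smoothly truncated operators. Let 0 < β < min(n,γ). If sup_{ε>0} ‖T_ε 1‖_{Λ_β} ≤ C < ∞, then the kernel satisfies the uniform cancellation condition (S3): there is C₃ such that |∫_{r₁ < d(x,y) < r₂} K(x,y) dμ(y)| ≤ C₃ for all 0 < r₁ < r₂ < ∞ and all x ∈ X. -/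
open MeasureTheory Metric

/-- If the smooth truncations `T_ε` of a standard singular integral kernel satisfy
`‖T_ε 1‖_{Λ_β} ≤ C` uniformly in `ε > 0`, then the kernel satisfies the uniform
cancellation condition (S3): annulus integrals of `K(x,·)` are uniformly bounded,
for all `x`. -/
theorem T1_implies_cancellation {X : Type*} [MetricSpace X] [MeasurableSpace X]
    [BorelSpace X] (μ : Measure X) (n A γ β : ℝ) (hn : 0 < n) (hA : 0 < A)
    (hγ : 0 < γ) (hγ1 : γ ≤ 1) (hβ : 0 < β) (hβn : β < n) (hβγ : β < γ)
    (growth : ∀ (x : X) (r : ℝ), 0 < r → μ (ball x r) ≤ ENNReal.ofReal (A * r ^ n))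
    (hfin : μ Set.univ < ⊤)
    (K : X → X → ℂ) (hKm : Measurable (Function.uncurry K)) (C₁ C₂ : ℝ)
    (hS1 : ∀ x y : X, x ≠ y → ‖K x y‖ ≤ C₁ / dist x y ^ n)
    (hS2 : ∀ x₁ x₂ y : X, x₁ ≠ y → 2 * dist x₁ x₂ ≤ dist x₁ y →
      ‖K x₁ y - K x₂ y‖ ≤ C₂ * dist x₁ x₂ ^ γ / dist x₁ y ^ (n + γ))
    (η : ℝ → ℝ) (hη : ContDiff ℝ 1 η) (hη0 : ∀ s, 0 ≤ η s) (hη1 : ∀ s, η s ≤ 1)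
    (hηlo : ∀ s : ℝ, s ≤ 1 / 2 → η s = 0) (hηhi : ∀ s : ℝ, 1 ≤ s → η s = 1)
    (C : ℝ)
    (hT1 : ∀ ε : ℝ, 0 < ε →
      (∀ x : X, ‖∫ y, (η (dist x y / ε) : ℂ) * K x y ∂μ‖ ≤ C) ∧
      (∀ x₁ x₂ : X,
        ‖(∫ y, (η (dist x₁ y / ε) : ℂ) * K x₁ y ∂μ) -
            ∫ y, (η (dist x₂ y / ε) : ℂ) * K x₂ y ∂μ‖ ≤ C * dist x₁ x₂ ^ β)) :
    ∃ C₃ : ℝ, ∀ (x : X) (r₁ r₂ : ℝ), 0 < r₁ → r₁ < r₂ →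
      ‖∫ y in {y : X | r₁ < dist x y ∧ dist x y < r₂}, K x y ∂μ‖ ≤ C₃ := by
  have : IsFiniteMeasure μ := ⟨hfin⟩
  set C₁' : ℝ := max C₁ 0 with hC₁'def
  have hC₁' : 0 ≤ C₁' := le_max_right _ _
  refine ⟨2 * C + 6 * C₁' * A * 2 ^ n, fun x r₁ r₂ hr₁ hr12 => ?_⟩
  have hr₂ : (0:ℝ) < r₂ := hr₁.trans hr12
  -- basic measurability
  have hKxm : Measurable (fun y => K x y) := hKm.of_uncurry_left
  have hdm : Continuous (fun y : X => dist x y) := continuous_const.dist continuous_id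
  -- kernel bound
  have hKb : ∀ (r : ℝ), 0 < r → ∀ y : X, r ≤ dist x y → ‖K x y‖ ≤ C₁' / r ^ n := by
    intro r hr y hy
    have hd : 0 < dist x y := lt_of_lt_of_le hr hy
    have hxy : x ≠ y := by
      intro h; rw [h, dist_self] at hd; exact lt_irrefl 0 hd
    have h1 := hS1 x y hxy
    have h2 : C₁ / dist x y ^ n ≤ C₁' / dist x y ^ n := by
      apply div_le_div_of_nonneg_right (le_max_left _ _)
      exact (Real.rpow_pos_of_pos hd n).le
    have h3 : C₁' / dist x y ^ n ≤ C₁' / r ^ n := by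
      apply div_le_div_of_nonneg_left hC₁' (Real.rpow_pos_of_pos hr n)
      exact Real.rpow_le_rpow hr.le hy hn.le
    linarith
  -- norm of coerced η
  have hηnorm : ∀ s : ℝ, ‖(η s : ℂ)‖ ≤ 1 := by
    intro s
    rw [Complex.norm_real, Real.norm_eq_abs, abs_of_nonneg (hη0 s)]
    exact hη1 s
  -- the truncated integrands
  set f : ℝ → X → ℂ := fun ε y => (η (dist x y / ε) : ℂ) * K x y with hfdef
  have hfm : ∀ ε : ℝ, Measurable (f ε) := by
    intro ε
    exact ((Complex.measurable_ofReal.comp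
      ((hη.continuous.comp (hdm.div_const ε)).measurable))).mul hKxm
  have hfbound : ∀ ε : ℝ, 0 < ε → ∀ y : X, ‖f ε y‖ ≤ C₁' / (ε / 2) ^ n := by
    intro ε hε y
    have hpos : (0:ℝ) < ε / 2 := by linarith
    rcases lt_or_ge (dist x y) (ε / 2) with hlt | hge
    · have : η (dist x y / ε) = 0 := by
        apply hηlo
        rw [div_le_div_iff₀ (by linarith) (by norm_num : (0:ℝ) < 2)] at *
        nlinarith [dist_nonneg (x := x) (y := y)]
      simp only [hfdef, this, Complex.ofReal_zero, zero_mul, norm_zero]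
      positivity
    · calc ‖f ε y‖ = ‖(η (dist x y / ε) : ℂ)‖ * ‖K x y‖ := norm_mul _ _
        _ ≤ 1 * (C₁' / (ε / 2) ^ n) := by
            apply mul_le_mul (hηnorm _) (hKb _ hpos y hge) (norm_nonneg _) zero_le_one
        _ = C₁' / (ε / 2) ^ n := one_mul _
  have hfint : ∀ ε : ℝ, 0 < ε → Integrable (f ε) μ := by
    intro ε hε
    exact (integrable_const (C₁' / (ε / 2) ^ n)).mono'
      (hfm ε).aestronglyMeasurable (Filter.Eventually.of_forall (hfbound ε hε))
  -- the annulus set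
  set S : Set X := {y : X | r₁ < dist x y ∧ dist x y < r₂} with hSdef
  have hSmeas : MeasurableSet S := by
    have : S = (fun y => dist x y) ⁻¹' (Set.Ioo r₁ r₂) := rfl
    rw [this]; exact hdm.measurable (measurableSet_Ioo)
  have hindm : Measurable (S.indicator fun y => K x y) := hKxm.indicator hSmeas
  have hindb : ∀ y : X, ‖S.indicator (fun y => K x y) y‖ ≤ C₁' / r₁ ^ n := by
    intro y
    by_cases hy : y ∈ S
    · rw [Set.indicator_of_mem hy]
      exact hKb r₁ hr₁ y hy.1.le
    · rw [Set.indicator_of_notMem hy, norm_zero]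
      positivity
  have hindint : Integrable (S.indicator fun y => K x y) μ :=
    (integrable_const (C₁' / r₁ ^ n)).mono' hindm.aestronglyMeasurable
      (Filter.Eventually.of_forall hindb)
  -- values of η on the relevant ranges
  have hη0' : ∀ (ε : ℝ), 0 < ε → ∀ y : X, dist x y ≤ ε / 2 → (η (dist x y / ε) : ℂ) = 0 := by
    intro ε hε y hy
    have : η (dist x y / ε) = 0 := hηlo _ (by rw [div_le_div_iff₀ hε (by norm_num : (0:ℝ) < 2)] at *; linarith)
    rw [this, Complex.ofReal_zero]
  have hη1' : ∀ (ε : ℝ), 0 < ε → ∀ y : X, ε ≤ dist x y → (η (dist x y / ε) : ℂ) = 1 := by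
    intro ε hε y hy
    have : η (dist x y / ε) = 1 := hηhi _ ((one_le_div hε).2 hy)
    rw [this, Complex.ofReal_one]
  -- the error function
  set h : X → ℂ := fun y => S.indicator (fun y => K x y) y - f (2 * r₁) y + f (2 * r₂) y
    with hhdef
  have h2r₁ : (0:ℝ) < 2 * r₁ := by linarith
  have h2r₂ : (0:ℝ) < 2 * r₂ := by linarith
  have hhint : Integrable h μ := (hindint.sub (hfint _ h2r₁)).add (hfint _ h2r₂)
  -- support of h
  set S₁ : Set X := {y : X | r₁ < dist x y ∧ dist x y < 2 * r₁} with hS₁def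
  set S₂ : Set X := {y : X | r₂ ≤ dist x y ∧ dist x y < 2 * r₂} with hS₂def
  have hS₁meas : MeasurableSet S₁ := by
    have : S₁ = (fun y => dist x y) ⁻¹' (Set.Ioo r₁ (2 * r₁)) := rfl
    rw [this]; exact hdm.measurable measurableSet_Ioo
  have hS₂meas : MeasurableSet S₂ := by
    have : S₂ = (fun y => dist x y) ⁻¹' (Set.Ico r₂ (2 * r₂)) := rfl
    rw [this]; exact hdm.measurable measurableSet_Ico
  have hsupp : ∀ y : X, y ∉ S₁ ∪ S₂ → h y = 0 := by
    intro y hy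
    rw [Set.mem_union] at hy
    push_neg at hy
    obtain ⟨hy1, hy2⟩ := hy
    simp only [hS₁def, Set.mem_setOf_eq, not_and, not_lt] at hy1
    simp only [hS₂def, Set.mem_setOf_eq, not_and, not_lt] at hy2
    rcases le_or_gt (dist x y) r₁ with hc1 | hc1
    · -- inner region : everything vanishes
      have hnS : y ∉ S := fun hyS => absurd hyS.1 (not_lt.2 hc1)
      simp only [hhdef, hfdef, Set.indicator_of_notMem hnS,
        hη0' (2 * r₁) h2r₁ y (by linarith), hη0' (2 * r₂) h2r₂ y (by linarith)]
      ring
    · have h2le : 2 * r₁ ≤ dist x y := hy1 hc1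
      rcases lt_or_ge (dist x y) r₂ with hc2 | hc2
      · -- middle region
        have hyS : y ∈ S := ⟨hc1, hc2⟩
        simp only [hhdef, hfdef, Set.indicator_of_mem hyS,
          hη1' (2 * r₁) h2r₁ y h2le, hη0' (2 * r₂) h2r₂ y (by linarith)]
        ring
      · have h2le2 : 2 * r₂ ≤ dist x y := hy2 hc2
        have hnS : y ∉ S := fun hyS => absurd hyS.2 (not_lt.2 hc2)
        simp only [hhdef, hfdef, Set.indicator_of_notMem hnS,
          hη1' (2 * r₁) h2r₁ y (by linarith), hη1' (2 * r₂) h2r₂ y h2le2]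
        ring
  -- pointwise bound on h where `r ≤ dist x y`
  have hhb : ∀ (r : ℝ), 0 < r → ∀ y : X, r ≤ dist x y → ‖h y‖ ≤ 3 * (C₁' / r ^ n) := by
    intro r hr y hy
    have hK : ‖K x y‖ ≤ C₁' / r ^ n := hKb r hr y hy
    have hind : ‖S.indicator (fun y => K x y) y‖ ≤ C₁' / r ^ n := by
      by_cases hyS : y ∈ S
      · rw [Set.indicator_of_mem hyS]; exact hK
      · rw [Set.indicator_of_notMem hyS, norm_zero]; positivity
    have hf1 : ‖f (2 * r₁) y‖ ≤ C₁' / r ^ n := by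
      calc ‖f (2 * r₁) y‖ = ‖(η (dist x y / (2 * r₁)) : ℂ)‖ * ‖K x y‖ := norm_mul _ _
        _ ≤ 1 * (C₁' / r ^ n) := mul_le_mul (hηnorm _) hK (norm_nonneg _) zero_le_one
        _ = C₁' / r ^ n := one_mul _
    have hf2 : ‖f (2 * r₂) y‖ ≤ C₁' / r ^ n := by
      calc ‖f (2 * r₂) y‖ = ‖(η (dist x y / (2 * r₂)) : ℂ)‖ * ‖K x y‖ := norm_mul _ _
        _ ≤ 1 * (C₁' / r ^ n) := mul_le_mul (hηnorm _) hK (norm_nonneg _) zero_le_one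
        _ = C₁' / r ^ n := one_mul _
    calc ‖h y‖ ≤ ‖S.indicator (fun y => K x y) y - f (2 * r₁) y‖ + ‖f (2 * r₂) y‖ :=
          norm_add_le _ _
      _ ≤ (‖S.indicator (fun y => K x y) y‖ + ‖f (2 * r₁) y‖) + ‖f (2 * r₂) y‖ := by
          gcongr; exact norm_sub_le _ _
      _ ≤ (C₁' / r ^ n + C₁' / r ^ n) + C₁' / r ^ n := by gcongr
      _ = 3 * (C₁' / r ^ n) := by ring
  -- measure bounds
  have hmeasb : ∀ (T : Set X) (r : ℝ), 0 < r → (∀ y ∈ T, dist x y < 2 * r) →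
      (μ T).toReal ≤ A * (2 * r) ^ n := by
    intro T r hr hT
    have hsub : T ⊆ ball x (2 * r) := by
      intro y hy; rw [mem_ball, dist_comm]; exact hT y hy
    have := (measure_mono hsub).trans (growth x (2 * r) (by linarith))
    apply ENNReal.toReal_le_of_le_ofReal _ this
    have : (0:ℝ) ≤ (2 * r) ^ n := Real.rpow_nonneg (by linarith) n
    positivity
  -- the generic set-integral bound
  have hsetb : ∀ (T : Set X) (r : ℝ), 0 < r → MeasurableSet T →
      (∀ y ∈ T, r ≤ dist x y) → (∀ y ∈ T, dist x y < 2 * r) →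
      ‖∫ y in T, h y ∂μ‖ ≤ 3 * C₁' * A * 2 ^ n := by
    intro T r hr hTm hTlo hThi
    have h1 : ‖∫ y in T, h y ∂μ‖ ≤ 3 * (C₁' / r ^ n) * (μ T).toReal := by
      apply norm_setIntegral_le_of_norm_le_const (measure_lt_top μ T)
        (fun y hy => hhb r hr y (hTlo y hy))
    have h2 : (μ T).toReal ≤ A * (2 * r) ^ n := hmeasb T r hr hThi
    have h3 : 3 * (C₁' / r ^ n) * (μ T).toReal ≤ 3 * (C₁' / r ^ n) * (A * (2 * r) ^ n) := by
      apply mul_le_mul_of_nonneg_left h2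
      have : (0:ℝ) < r ^ n := Real.rpow_pos_of_pos hr n
      positivity
    have h4 : 3 * (C₁' / r ^ n) * (A * (2 * r) ^ n) = 3 * C₁' * A * 2 ^ n := by
      rw [Real.mul_rpow (by norm_num) hr.le]
      have hrn : r ^ n ≠ 0 := ne_of_gt (Real.rpow_pos_of_pos hr n)
      field_simp
    linarith
  -- decompose the integral of h
  have hUmeas : MeasurableSet (S₁ ∪ S₂) := hS₁meas.union hS₂meas
  have hsplit : ∫ y, h y ∂μ = (∫ y in S₁, h y ∂μ) + ∫ y in S₂ \ S₁, h y ∂μ := by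
    have e1 : ∫ y, h y ∂μ = (∫ y in S₁ ∪ S₂, h y ∂μ) + ∫ y in (S₁ ∪ S₂)ᶜ, h y ∂μ :=
      (integral_add_compl hUmeas hhint).symm
    have e2 : ∫ y in (S₁ ∪ S₂)ᶜ, h y ∂μ = 0 :=
      setIntegral_eq_zero_of_forall_eq_zero fun y hy => hsupp y hy
    have e3 : S₁ ∪ S₂ = S₁ ∪ (S₂ \ S₁) := (Set.union_diff_self).symm
    rw [e1, e2, add_zero, e3,
      setIntegral_union (Set.disjoint_sdiff_right) (hS₂meas.diff hS₁meas)
        hhint.integrableOn hhint.integrableOn]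
  -- bound the two pieces
  have hb1 : ‖∫ y in S₁, h y ∂μ‖ ≤ 3 * C₁' * A * 2 ^ n :=
    hsetb S₁ r₁ hr₁ hS₁meas (fun y hy => hy.1.le) (fun y hy => hy.2)
  have hb2 : ‖∫ y in S₂ \ S₁, h y ∂μ‖ ≤ 3 * C₁' * A * 2 ^ n :=
    hsetb (S₂ \ S₁) r₂ hr₂ (hS₂meas.diff hS₁meas) (fun y hy => hy.1.1)
      (fun y hy => hy.1.2)
  have hhbound : ‖∫ y, h y ∂μ‖ ≤ 6 * C₁' * A * 2 ^ n := by
    rw [hsplit]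
    calc ‖(∫ y in S₁, h y ∂μ) + ∫ y in S₂ \ S₁, h y ∂μ‖
        ≤ ‖∫ y in S₁, h y ∂μ‖ + ‖∫ y in S₂ \ S₁, h y ∂μ‖ := norm_add_le _ _
      _ ≤ 3 * C₁' * A * 2 ^ n + 3 * C₁' * A * 2 ^ n := add_le_add hb1 hb2
      _ = 6 * C₁' * A * 2 ^ n := by ring
  -- the key algebraic identity
  have hinth : ∫ y, h y ∂μ = (∫ y, S.indicator (fun y => K x y) y ∂μ)
      - (∫ y, f (2 * r₁) y ∂μ) + ∫ y, f (2 * r₂) y ∂μ := by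
    have e1 : ∫ y, ((S.indicator (fun y => K x y) y - f (2 * r₁) y) + f (2 * r₂) y) ∂μ
        = (∫ y, (S.indicator (fun y => K x y) y - f (2 * r₁) y) ∂μ) + ∫ y, f (2 * r₂) y ∂μ :=
      integral_add (hindint.sub (hfint _ h2r₁)) (hfint _ h2r₂)
    have e2 : ∫ y, (S.indicator (fun y => K x y) y - f (2 * r₁) y) ∂μ
        = (∫ y, S.indicator (fun y => K x y) y ∂μ) - ∫ y, f (2 * r₁) y ∂μ :=
      integral_sub hindint (hfint _ h2r₁)
    rw [hhdef]
    rw [e1, e2]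
  have hkey : (∫ y in S, K x y ∂μ) =
      ((∫ y, f (2 * r₁) y ∂μ) - ∫ y, f (2 * r₂) y ∂μ) + ∫ y, h y ∂μ := by
    rw [← integral_indicator hSmeas, hinth]
    ring
  -- truncation bounds
  have hJ1 : ‖∫ y, f (2 * r₁) y ∂μ‖ ≤ C := (hT1 (2 * r₁) h2r₁).1 x
  have hJ2 : ‖∫ y, f (2 * r₂) y ∂μ‖ ≤ C := (hT1 (2 * r₂) h2r₂).1 x
  -- conclude
  calc ‖∫ y in S, K x y ∂μ‖
      = ‖((∫ y, f (2 * r₁) y ∂μ) - ∫ y, f (2 * r₂) y ∂μ) + ∫ y, h y ∂μ‖ := by rw [hkey]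
    _ ≤ ‖(∫ y, f (2 * r₁) y ∂μ) - ∫ y, f (2 * r₂) y ∂μ‖ + ‖∫ y, h y ∂μ‖ := norm_add_le _ _
    _ ≤ (‖∫ y, f (2 * r₁) y ∂μ‖ + ‖∫ y, f (2 * r₂) y ∂μ‖) + ‖∫ y, h y ∂μ‖ := by
        gcongr; exact norm_sub_le _ _
    _ ≤ (C + C) + 6 * C₁' * A * 2 ^ n := by gcongr
    _ = 2 * C + 6 * C₁' * A * 2 ^ n := by ring
end

section
/- Let (X,d,μ) satisfy the n-dimensional growth condition with μ(X) < ∞. Let K be a standard singular integral kernel that additionally satisfies the cancellation condition (S3) (uniformly bounded integrals over annuli, μ-a.e. in x) and condition (S4) (the limit lim_{ε→0} ∫_{ε<d(x,y)<1} K(x,y) dμ(y) exists μ-a.e. in x). Then for every f in Lip_β with 0 < β < min(n,γ), the principal value Kf(x) = lim_{ε→0} ∫_{d(x,y)>ε} K(x,y) f(y) dμ(y) exists μ-a.e. in x, and ‖Kf‖_∞ ≤ c‖f‖_{Lip_β}. -/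
open MeasureTheory Metric Filter ENNReal Topology

lemma annuli_lintegral {X : Type*} [MetricSpace X] [MeasurableSpace X] [BorelSpace X]
    (μ : Measure X) (n A β : ℝ) (hA : 0 < A) (hβ : 0 < β) (hβn : β < n)
    (growth : ∀ (x : X) (r : ℝ), 0 < r → μ (ball x r) ≤ ENNReal.ofReal (A * r ^ n))
    (x : X) :
    ∫⁻ y in {y | 0 < dist x y ∧ dist x y < 1}, ENNReal.ofReal (dist x y ^ (β - n)) ∂μ
      ≤ ENNReal.ofReal (A * 2 ^ (n - β)) * (1 - ENNReal.ofReal ((2:ℝ) ^ (-β)))⁻¹ := by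
  set Ak : ℕ → Set X := fun k => {y | (2:ℝ) ^ (-(k:ℝ)-1) ≤ dist x y ∧ dist x y < 2 ^ (-(k:ℝ))}
    with hAk
  have hsub : {y | 0 < dist x y ∧ dist x y < 1} ⊆ ⋃ k, Ak k := by
    rintro y ⟨h0, h1⟩
    obtain ⟨m, hm1, hm2⟩ := exists_mem_Ico_zpow h0 (one_lt_two (α := ℝ))
    have hmneg : m + 1 ≤ 0 := by
      by_contra h
      push_neg at h
      have : (1:ℝ) ≤ (2:ℝ) ^ m := one_le_zpow₀ one_le_two (by omega)
      linarith [hm1, h1]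
    refine Set.mem_iUnion.2 ⟨(-(m+1)).toNat, ?_, ?_⟩
    · have : ((2:ℝ) ^ m : ℝ) = (2:ℝ) ^ (-((-(m+1)).toNat : ℝ) - 1) := by
        rw [← Real.rpow_intCast 2 m]
        congr 1
        have : ((-(m+1)).toNat : ℤ) = -(m+1) := Int.toNat_of_nonneg (by omega)
        have := congrArg (fun z : ℤ => (z : ℝ)) this
        push_cast at this ⊢
        linarith
      rw [← this]; exact hm1
    · have : ((2:ℝ) ^ (m+1) : ℝ) = (2:ℝ) ^ (-((-(m+1)).toNat : ℝ)) := by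
        rw [← Real.rpow_intCast 2 (m+1)]
        congr 1
        have : ((-(m+1)).toNat : ℤ) = -(m+1) := Int.toNat_of_nonneg (by omega)
        have := congrArg (fun z : ℤ => (z : ℝ)) this
        push_cast at this ⊢
        linarith
      rw [← this]; exact hm2
  have hdm : Measurable fun y => dist x y := (continuous_const.dist continuous_id).measurable
  have hmeas : ∀ k, MeasurableSet (Ak k) := fun k =>
    (measurableSet_le measurable_const hdm).inter (measurableSet_lt hdm measurable_const)
  calc ∫⁻ y in {y | 0 < dist x y ∧ dist x y < 1}, ENNReal.ofReal (dist x y ^ (β - n)) ∂μ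
      ≤ ∫⁻ y in ⋃ k, Ak k, ENNReal.ofReal (dist x y ^ (β - n)) ∂μ :=
        lintegral_mono_set hsub
    _ ≤ ∑' k, ∫⁻ y in Ak k, ENNReal.ofReal (dist x y ^ (β - n)) ∂μ :=
        lintegral_iUnion_le _ _
    _ ≤ ∑' k, ENNReal.ofReal (A * 2 ^ (n - β)) * (ENNReal.ofReal ((2:ℝ) ^ (-β)))^k := by
        refine ENNReal.tsum_le_tsum fun k => ?_
        have hb : (0:ℝ) < (2:ℝ) ^ (-(k:ℝ)-1) := Real.rpow_pos_of_pos two_pos _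
        have step1 : ∫⁻ y in Ak k, ENNReal.ofReal (dist x y ^ (β - n)) ∂μ
            ≤ ENNReal.ofReal (((2:ℝ) ^ (-(k:ℝ)-1)) ^ (β - n)) * μ (Ak k) := by
          rw [← setLIntegral_const (Ak k) _]
          refine setLIntegral_mono' (hmeas k) fun y hy => ?_
          exact ENNReal.ofReal_le_ofReal
            (Real.rpow_le_rpow_of_nonpos hb hy.1 (by linarith))
        have step2 : μ (Ak k) ≤ ENNReal.ofReal (A * ((2:ℝ) ^ (-(k:ℝ))) ^ n) := by
          refine le_trans (measure_mono fun y hy => ?_) (growth x _ (Real.rpow_pos_of_pos two_pos _))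
          exact mem_ball'.2 hy.2
        have hre : ((2:ℝ) ^ (-(k:ℝ)-1)) ^ (β-n) * (A * ((2:ℝ) ^ (-(k:ℝ))) ^ n)
            = A * 2 ^ (n-β) * 2 ^ (-β*(k:ℝ)) := by
          rw [← Real.rpow_mul zero_le_two, ← Real.rpow_mul zero_le_two]
          calc (2:ℝ) ^ ((-(k:ℝ)-1)*(β-n)) * (A * 2 ^ ((-(k:ℝ))*n))
              = A * ((2:ℝ) ^ ((-(k:ℝ)-1)*(β-n)) * 2 ^ ((-(k:ℝ))*n)) := by ring
            _ = A * 2 ^ ((-(k:ℝ)-1)*(β-n) + (-(k:ℝ))*n) := by rw [← Real.rpow_add two_pos]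
            _ = A * 2 ^ ((n-β) + (-β*(k:ℝ))) := by ring_nf
            _ = A * (2 ^ (n-β) * 2 ^ (-β*(k:ℝ))) := by rw [Real.rpow_add two_pos]
            _ = A * 2 ^ (n-β) * 2 ^ (-β*(k:ℝ)) := by ring
        calc ∫⁻ y in Ak k, ENNReal.ofReal (dist x y ^ (β - n)) ∂μ
            ≤ ENNReal.ofReal (((2:ℝ) ^ (-(k:ℝ)-1)) ^ (β - n))
              * ENNReal.ofReal (A * ((2:ℝ) ^ (-(k:ℝ))) ^ n) :=
              le_trans step1 (mul_le_mul_right step2 _)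
          _ = ENNReal.ofReal (((2:ℝ) ^ (-(k:ℝ)-1)) ^ (β-n) * (A * ((2:ℝ) ^ (-(k:ℝ))) ^ n)) :=
              (ENNReal.ofReal_mul (Real.rpow_nonneg hb.le _)).symm
          _ = ENNReal.ofReal (A * 2 ^ (n-β) * 2 ^ (-β*(k:ℝ))) := by rw [hre]
          _ = ENNReal.ofReal (A * 2 ^ (n - β)) * (ENNReal.ofReal ((2:ℝ) ^ (-β)))^k := by
              rw [← ENNReal.ofReal_pow (Real.rpow_nonneg zero_le_two _),
                ← ENNReal.ofReal_mul (by positivity)]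
              congr 1
              rw [← Real.rpow_natCast ((2:ℝ) ^ (-β)) k, ← Real.rpow_mul zero_le_two]
    _ = ENNReal.ofReal (A * 2 ^ (n - β)) * (1 - ENNReal.ofReal ((2:ℝ) ^ (-β)))⁻¹ := by
        rw [ENNReal.tsum_mul_left, ENNReal.tsum_geometric]

/-- For a standard singular integral kernel satisfying the cancellation conditions
(S3) and (S4), the principal value `Kf(x) = lim_{ε→0} ∫_{d(x,y)>ε} K(x,y) f(y) dμ(y)`
exists μ-a.e. for every `f ∈ Lip_β`, `0 < β < min(n,γ)`, with `‖Kf‖_∞ ≤ c‖f‖_{Lip_β}`. -/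
theorem pv_exists_ae {X : Type*} [MetricSpace X] [MeasurableSpace X]
    [BorelSpace X] (μ : Measure X) (n A γ β : ℝ) (hn : 0 < n) (hA : 0 < A)
    (hγ : 0 < γ) (hγ1 : γ ≤ 1) (hβ : 0 < β) (hβn : β < n) (hβγ : β < γ)
    (growth : ∀ (x : X) (r : ℝ), 0 < r → μ (ball x r) ≤ ENNReal.ofReal (A * r ^ n))
    (hfin : μ Set.univ < ⊤)
    (K : X → X → ℂ) (hKm : Measurable (Function.uncurry K)) (C₁ C₂ C₃ : ℝ)
    (hS1 : ∀ x y : X, x ≠ y → ‖K x y‖ ≤ C₁ / dist x y ^ n)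
    (hS2 : ∀ x₁ x₂ y : X, x₁ ≠ y → 2 * dist x₁ x₂ ≤ dist x₁ y →
      ‖K x₁ y - K x₂ y‖ ≤ C₂ * dist x₁ x₂ ^ γ / dist x₁ y ^ (n + γ))
    (hS3 : ∀ᵐ x ∂μ, ∀ r₁ r₂ : ℝ, 0 < r₁ → r₁ < r₂ →
      ‖∫ y in {y : X | r₁ < dist x y ∧ dist x y < r₂}, K x y ∂μ‖ ≤ C₃)
    (hS4 : ∀ᵐ x ∂μ, ∃ l : ℂ, Tendsto
      (fun ε : ℝ => ∫ y in {y : X | ε < dist x y ∧ dist x y < 1}, K x y ∂μ)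
      (nhdsWithin 0 (Set.Ioi 0)) (nhds l)) :
    ∃ c > 0, ∀ (f : X → ℂ) (M L : ℝ), Measurable f →
      (∀ x, ‖f x‖ ≤ M) → (∀ x y : X, ‖f x - f y‖ ≤ L * dist x y ^ β) →
      ∀ᵐ x ∂μ, ∃ l : ℂ,
        Tendsto (fun ε : ℝ => ∫ y in {y : X | ε < dist x y}, K x y * f y ∂μ)
          (nhdsWithin 0 (Set.Ioi 0)) (nhds l) ∧
        ‖l‖ ≤ c * (M + L) := by
  classical
  set C₁' := max C₁ 0 with hC₁'def
  set C₃' := max C₃ 0 with hC₃'def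
  have hC₁0 : 0 ≤ C₁' := le_max_right _ _
  have hC₃0 : 0 ≤ C₃' := le_max_right _ _
  set B : ℝ≥0∞ := ENNReal.ofReal (A * 2 ^ (n - β)) * (1 - ENNReal.ofReal ((2:ℝ) ^ (-β)))⁻¹
    with hBdef
  have hBne : B ≠ ⊤ := by
    have h1 : ENNReal.ofReal ((2:ℝ) ^ (-β)) < 1 := by
      rw [← ENNReal.ofReal_one]
      exact (ENNReal.ofReal_lt_ofReal_iff one_pos).2
        (Real.rpow_lt_one_of_one_lt_of_neg one_lt_two (neg_lt_zero.2 hβ))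
    exact ENNReal.mul_ne_top ENNReal.ofReal_ne_top
      (ENNReal.inv_ne_top.2 (tsub_pos_of_lt h1).ne')
  have hB0 : 0 ≤ B.toReal := ENNReal.toReal_nonneg
  have hu0 : 0 ≤ (μ Set.univ).toReal := ENNReal.toReal_nonneg
  have hcpos : 0 < C₁' * B.toReal + C₃' + C₁' * (μ Set.univ).toReal + 1 := by
    nlinarith [mul_nonneg hC₁0 hB0, mul_nonneg hC₁0 hu0]
  refine ⟨C₁' * B.toReal + C₃' + C₁' * (μ Set.univ).toReal + 1, hcpos, ?_⟩
  intro f M L hfm hMf hLf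
  by_cases hL0 : 0 ≤ L
  swap
  -- Degenerate case: L < 0 forces X to be a subsingleton, hence μ = 0.
  · push_neg at hL0
    have hss : ∀ a b : X, a = b := by
      intro a b; by_contra hab
      have hd : 0 < dist a b := dist_pos.2 hab
      have h := hLf a b
      nlinarith [norm_nonneg (f a - f b), Real.rpow_pos_of_pos hd β]
    have hμ : μ = 0 := by
      rcases isEmpty_or_nonempty X with hX | hX
      · have : μ Set.univ = 0 := by
          rw [Set.univ_eq_empty_iff.2 hX, measure_empty]
        exact Measure.measure_univ_eq_zero.mp this
      · obtain ⟨x₀⟩ := hX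
        have huniv : ∀ r : ℝ, 0 < r → μ Set.univ ≤ ENNReal.ofReal (A * r ^ n) := fun r hr =>
          le_trans (measure_mono fun y _ => by
            simp only [mem_ball]
            rw [hss y x₀, dist_self]; exact hr) (growth x₀ r hr)
        have hcont : Tendsto (fun r : ℝ => A * r ^ n) (𝓝[>] (0:ℝ)) (𝓝 0) := by
          have h1 : ContinuousAt (fun r : ℝ => r ^ n) 0 :=
            Real.continuousAt_rpow_const 0 n (Or.inr hn.le)
          have h2 : Tendsto (fun r : ℝ => A * r ^ n) (𝓝 (0:ℝ)) (𝓝 (A * (0:ℝ) ^ n)) :=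
            (continuousAt_const.mul h1).tendsto
          rw [Real.zero_rpow hn.ne', mul_zero] at h2
          exact h2.mono_left nhdsWithin_le_nhds
        have hlim : Tendsto (fun r : ℝ => ENNReal.ofReal (A * r ^ n)) (𝓝[>] (0:ℝ)) (𝓝 0) := by
          have := (ENNReal.continuous_ofReal.tendsto 0).comp hcont
          simpa [Function.comp_def] using this
        have : μ Set.univ ≤ 0 :=
          ge_of_tendsto hlim (eventually_mem_nhdsWithin.mono fun r hr => huniv r hr)
        exact Measure.measure_univ_eq_zero.mp (le_antisymm this zero_le)
    rw [hμ]; simp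
  -- Main case.
  filter_upwards [hS3, hS4] with x hx3 hx4
  obtain ⟨l₄, hl₄⟩ := hx4
  have hM0 : 0 ≤ M := le_trans (norm_nonneg (f x)) (hMf x)
  have hdm : Measurable fun y => dist x y := (continuous_const.dist continuous_id).measurable
  set S : Set X := {y | 0 < dist x y ∧ dist x y < 1} with hSdef
  set T : Set X := {y | 1 ≤ dist x y} with hTdef
  have hSm : MeasurableSet S :=
    (measurableSet_lt measurable_const hdm).inter (measurableSet_lt hdm measurable_const)
  have hTm : MeasurableSet T := measurableSet_le measurable_const hdm
  have hAnnm : ∀ ε : ℝ, MeasurableSet {y | ε < dist x y ∧ dist x y < 1} := fun ε =>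
    (measurableSet_lt measurable_const hdm).inter (measurableSet_lt hdm measurable_const)
  have hKx : Measurable (K x) := hKm.of_uncurry_left
  set g : X → ℂ := fun y => K x y * (f y - f x) with hgdef
  have hgm : AEStronglyMeasurable g μ :=
    (hKx.mul (hfm.sub measurable_const)).aestronglyMeasurable
  have hKnorm : ∀ y : X, 0 < dist x y → ‖K x y‖ ≤ C₁' / dist x y ^ n := by
    intro y hy
    refine le_trans (hS1 x y (dist_pos.mp hy)) ?_
    exact (div_le_div_iff_of_pos_right (Real.rpow_pos_of_pos hy n)).2 (le_max_left _ _)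
  have hgb : ∀ y ∈ S, ‖g y‖ ≤ C₁' * L * dist x y ^ (β - n) := by
    intro y hy
    have hd : 0 < dist x y := hy.1
    have h2 : ‖f y - f x‖ ≤ L * dist x y ^ β := by
      have := hLf y x; rwa [dist_comm y x] at this
    calc ‖g y‖ = ‖K x y‖ * ‖f y - f x‖ := norm_mul _ _
      _ ≤ (C₁' / dist x y ^ n) * (L * dist x y ^ β) :=
          mul_le_mul (hKnorm y hd) h2 (norm_nonneg _) (by positivity)
      _ = C₁' * L * dist x y ^ (β - n) := by rw [Real.rpow_sub hd]; ring
  have hgl : ∫⁻ y in S, ENNReal.ofReal ‖g y‖ ∂μ ≤ ENNReal.ofReal (C₁' * L) * B := by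
    calc ∫⁻ y in S, ENNReal.ofReal ‖g y‖ ∂μ
        ≤ ∫⁻ y in S, ENNReal.ofReal (C₁' * L) * ENNReal.ofReal (dist x y ^ (β - n)) ∂μ := by
          refine setLIntegral_mono' hSm fun y hy => ?_
          rw [← ENNReal.ofReal_mul (by positivity)]
          exact ENNReal.ofReal_le_ofReal (hgb y hy)
      _ = ENNReal.ofReal (C₁' * L) * ∫⁻ y in S, ENNReal.ofReal (dist x y ^ (β - n)) ∂μ :=
          lintegral_const_mul' _ _ ENNReal.ofReal_ne_top
      _ ≤ ENNReal.ofReal (C₁' * L) * B :=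
          mul_le_mul_right (annuli_lintegral μ n A β hA hβ hβn growth x) _
  have hgint : IntegrableOn g S μ := by
    refine ⟨hgm.restrict, ?_⟩
    rw [hasFiniteIntegral_iff_norm]
    exact lt_of_le_of_lt hgl (ENNReal.mul_ne_top ENNReal.ofReal_ne_top hBne).lt_top
  have hTfin : μ T ≠ ⊤ := ((measure_mono (Set.subset_univ T)).trans_lt hfin).ne
  have hKfb : ∀ y ∈ T, ‖K x y * f y‖ ≤ C₁' * M := by
    intro y hy
    have hd1 : (1:ℝ) ≤ dist x y := hy
    have hd : 0 < dist x y := lt_of_lt_of_le one_pos hd1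
    have hdn : (1:ℝ) ≤ dist x y ^ n := Real.one_le_rpow hd1 hn.le
    calc ‖K x y * f y‖ = ‖K x y‖ * ‖f y‖ := norm_mul _ _
      _ ≤ (C₁' / dist x y ^ n) * M :=
          mul_le_mul (hKnorm y hd) (hMf y) (norm_nonneg _) (by positivity)
      _ ≤ C₁' * M := mul_le_mul_of_nonneg_right (div_le_self hC₁0 hdn) hM0
  have hTint : IntegrableOn (fun y => K x y * f y) T μ :=
    Measure.integrableOn_of_bounded hTfin (hKx.mul hfm).aestronglyMeasurable
      ((ae_restrict_iff' hTm).2 (ae_of_all _ hKfb))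
  have hKann : ∀ ε : ℝ, 0 < ε → IntegrableOn (K x) {y | ε < dist x y ∧ dist x y < 1} μ := by
    intro ε hε
    have hb : ∀ y ∈ {y | ε < dist x y ∧ dist x y < 1}, ‖K x y‖ ≤ C₁' / ε ^ n := by
      intro y hy
      have hd : 0 < dist x y := hε.trans hy.1
      calc ‖K x y‖ ≤ C₁' / dist x y ^ n := hKnorm y hd
        _ ≤ C₁' / ε ^ n := by
            gcongr
            · exact hy.1.le
    exact Measure.integrableOn_of_bounded
      (((measure_mono (Set.subset_univ _)).trans_lt hfin).ne)
      hKx.aestronglyMeasurable ((ae_restrict_iff' (hAnnm ε)).2 (ae_of_all _ hb))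
  have hfe : (fun y => K x y * f y) = fun y => g y + f x * K x y := by
    funext y; simp only [hgdef]; ring
  have hKfann : ∀ ε : ℝ, 0 < ε →
      IntegrableOn (fun y => K x y * f y) {y | ε < dist x y ∧ dist x y < 1} μ := by
    intro ε hε
    have h1 : IntegrableOn g {y | ε < dist x y ∧ dist x y < 1} μ :=
      hgint.mono_set fun y hy => ⟨hε.trans hy.1, hy.2⟩
    have h2 := (hKann ε hε).const_mul (f x)
    rw [hfe]
    exact h1.add h2
  have hsplit : ∀ ε ∈ Set.Ioo (0:ℝ) 1,
      ∫ y in {y | ε < dist x y}, K x y * f y ∂μ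
        = (∫ y in {y | ε < dist x y ∧ dist x y < 1}, g y ∂μ)
          + f x * (∫ y in {y | ε < dist x y ∧ dist x y < 1}, K x y ∂μ)
          + ∫ y in T, K x y * f y ∂μ := by
    intro ε hε
    have hseteq : {y : X | ε < dist x y} = {y | ε < dist x y ∧ dist x y < 1} ∪ T := by
      ext y
      simp only [Set.mem_setOf_eq, Set.mem_union, hTdef]
      constructor
      · intro h
        rcases lt_or_ge (dist x y) 1 with h1 | h1
        · exact Or.inl ⟨h, h1⟩
        · exact Or.inr h1
      · rintro (⟨h, _⟩ | h)
        · exact h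
        · exact lt_of_lt_of_le hε.2 h
    have hdisj : Disjoint {y : X | ε < dist x y ∧ dist x y < 1} T := by
      rw [Set.disjoint_left]
      rintro y ⟨_, h2⟩ h3
      exact absurd h3 (not_le.2 h2)
    rw [hseteq, setIntegral_union hdisj hTm (hKfann ε hε.1) hTint]
    congr 1
    have h1 : IntegrableOn g {y | ε < dist x y ∧ dist x y < 1} μ :=
      hgint.mono_set fun y hy => ⟨hε.1.trans hy.1, hy.2⟩
    have h2 := (hKann ε hε.1).const_mul (f x)
    rw [hfe, integral_add h1 h2, integral_const_mul]
  have hT1 : Tendsto (fun ε : ℝ => ∫ y in {y | ε < dist x y ∧ dist x y < 1}, g y ∂μ)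
      (𝓝[>] 0) (𝓝 (∫ y in S, g y ∂μ)) := by
    have hind : ∀ ε : ℝ, (∫ y in {y | ε < dist x y ∧ dist x y < 1}, g y ∂μ)
        = ∫ y, Set.indicator {y | ε < dist x y ∧ dist x y < 1} g y ∂μ :=
      fun ε => (integral_indicator (hAnnm ε)).symm
    rw [show (∫ y in S, g y ∂μ) = ∫ y, S.indicator g y ∂μ from (integral_indicator hSm).symm]
    simp_rw [hind]
    refine tendsto_integral_filter_of_dominated_convergence (S.indicator fun y => ‖g y‖)
      (Eventually.of_forall fun ε => hgm.indicator (hAnnm ε)) ?_ ?_ ?_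
    · filter_upwards [eventually_mem_nhdsWithin] with ε (hε : (0:ℝ) < ε)
      refine ae_of_all _ fun y => ?_
      rw [norm_indicator_eq_indicator_norm]
      by_cases hy : y ∈ {y | ε < dist x y ∧ dist x y < 1}
      · rw [Set.indicator_of_mem hy, Set.indicator_of_mem (show y ∈ S from ⟨hε.trans hy.1, hy.2⟩)]
      · rw [Set.indicator_of_notMem hy]
        exact Set.indicator_nonneg (fun y _ => norm_nonneg _) y
    · exact (integrable_indicator_iff hSm).2 hgint.norm
    · refine ae_of_all _ fun y => ?_
      by_cases hy : y ∈ S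
      · refine Tendsto.congr' ?_ (tendsto_const_nhds (x := S.indicator g y))
        filter_upwards [Ioo_mem_nhdsGT_of_mem (Set.left_mem_Ico.2 hy.1)] with ε hε
        rw [Set.indicator_of_mem hy, Set.indicator_of_mem (show y ∈ {y | ε < dist x y ∧ dist x y < 1} from ⟨hε.2, hy.2⟩)]
      · refine Tendsto.congr' ?_ (tendsto_const_nhds (x := S.indicator g y))
        filter_upwards [eventually_mem_nhdsWithin] with ε (hε : (0:ℝ) < ε)
        rw [Set.indicator_of_notMem hy, Set.indicator_of_notMem]
        intro hy2
        exact hy ⟨hε.trans hy2.1, hy2.2⟩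
  set l : ℂ := (∫ y in S, g y ∂μ) + f x * l₄ + ∫ y in T, K x y * f y ∂μ with hldef
  refine ⟨l, ?_, ?_⟩
  · have hten : Tendsto (fun ε : ℝ =>
        (∫ y in {y | ε < dist x y ∧ dist x y < 1}, g y ∂μ)
          + f x * (∫ y in {y | ε < dist x y ∧ dist x y < 1}, K x y ∂μ)
          + ∫ y in T, K x y * f y ∂μ) (𝓝[>] 0) (𝓝 l) :=
      (hT1.add (hl₄.const_mul (f x))).add tendsto_const_nhds
    refine Tendsto.congr' ?_ hten
    filter_upwards [Ioo_mem_nhdsGT_of_mem (Set.left_mem_Ico.2 one_pos)] with ε hε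
    exact (hsplit ε hε).symm
  · have h1 : ‖∫ y in S, g y ∂μ‖ ≤ C₁' * L * B.toReal := by
      refine le_trans (norm_integral_le_lintegral_norm _) ?_
      have h := ENNReal.toReal_mono (ENNReal.mul_ne_top ENNReal.ofReal_ne_top hBne) hgl
      rwa [ENNReal.toReal_mul, ENNReal.toReal_ofReal (by positivity)] at h
    have h2 : ‖l₄‖ ≤ C₃' := by
      refine le_of_tendsto hl₄.norm ?_
      filter_upwards [Ioo_mem_nhdsGT_of_mem (Set.left_mem_Ico.2 one_pos)] with ε hε
      exact le_trans (hx3 ε 1 hε.1 hε.2) (le_max_left _ _)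
    have h3 : ‖∫ y in T, K x y * f y ∂μ‖ ≤ C₁' * M * (μ Set.univ).toReal := by
      refine le_trans (norm_setIntegral_le_of_norm_le_const hTfin.lt_top hKfb) ?_
      exact mul_le_mul_of_nonneg_left
        (ENNReal.toReal_mono hfin.ne (measure_mono (Set.subset_univ T))) (by positivity)
    have h4 : ‖f x * l₄‖ ≤ M * C₃' := by
      rw [norm_mul]
      exact mul_le_mul (hMf x) h2 (norm_nonneg _) hM0
    have hl : ‖l‖ ≤ C₁' * L * B.toReal + M * C₃' + C₁' * M * (μ Set.univ).toReal :=
      le_trans norm_add₃_le (add_le_add (add_le_add h1 h4) h3)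
    refine le_trans hl ?_
    nlinarith [mul_nonneg hM0 (mul_nonneg hC₁0 hB0), mul_nonneg hL0 hC₃0,
      mul_nonneg hL0 (mul_nonneg hC₁0 hu0), mul_nonneg hM0 hM0, hM0, hL0,
      mul_nonneg hC₁0 hB0, mul_nonneg hC₁0 hu0]
end

section
/- (M. Krein's theorem) Let H be a real or complex Hilbert space with inner product (·,·), and let D ⊆ H be a Banach space, dense in H, with ‖x‖_H ≤ C‖x‖_D for x ∈ D. Let A, B : D → D be linear operators with ‖Ax‖_D ≤ C_A‖x‖_D and ‖Bx‖_D ≤ C_B‖x‖_D for x ∈ D, such that (Ax, y) = (x, By) for all x, y ∈ D. Then ‖Ax‖_H ≤ (C_A C_B)^{1/2}‖x‖_H and ‖Bx‖_H ≤ (C_A C_B)^{1/2}‖x‖_H for all x ∈ D, and hence A and B extend to bounded operators on H with norm at most (C_A C_B)^{1/2}. -/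
open scoped NNReal

/-- Core estimate for Krein's theorem: `‖j (A x)‖ ≤ √(C_A C_B) ‖j x‖`. -/
lemma krein_aux {𝕜 H D : Type*} [RCLike 𝕜]
    [NormedAddCommGroup H] [InnerProductSpace 𝕜 H]
    [NormedAddCommGroup D] [NormedSpace 𝕜 D]
    (j : D →ₗ[𝕜] H) (C : ℝ) (hj : ∀ x : D, ‖j x‖ ≤ C * ‖x‖)
    (A B : D →ₗ[𝕜] D) (CA CB : ℝ) (hCA : 0 ≤ CA) (hCB : 0 ≤ CB)
    (hA : ∀ x : D, ‖A x‖ ≤ CA * ‖x‖) (hB : ∀ x : D, ‖B x‖ ≤ CB * ‖x‖)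
    (hadj : ∀ x y : D, (inner 𝕜 (j (A x)) (j y) : 𝕜) = inner 𝕜 (j x) (j (B y))) :
    ∀ x : D, ‖j (A x)‖ ≤ Real.sqrt (CA * CB) * ‖j x‖ := by
  have hCC : (0:ℝ) ≤ CA * CB := mul_nonneg hCA hCB
  set T : Module.End 𝕜 D := B ∘ₗ A with hT
  -- D-norm bound for T
  have hTb : ∀ x : D, ‖T x‖ ≤ (CA * CB) * ‖x‖ := by
    intro x
    calc ‖B (A x)‖ ≤ CB * ‖A x‖ := hB _
      _ ≤ CB * (CA * ‖x‖) := by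
          exact mul_le_mul_of_nonneg_left (hA x) hCB
      _ = (CA * CB) * ‖x‖ := by ring
  have hTn : ∀ (n : ℕ) (x : D), ‖(T ^ n) x‖ ≤ (CA * CB) ^ n * ‖x‖ := by
    intro n
    induction n with
    | zero => intro x; simp
    | succ n ih =>
        intro x
        have h1 : (T ^ (n + 1)) x = (T ^ n) (T x) := by
          rw [pow_succ]; rfl
        rw [h1]
        calc ‖(T ^ n) (T x)‖ ≤ (CA * CB) ^ n * ‖T x‖ := ih _
          _ ≤ (CA * CB) ^ n * ((CA * CB) * ‖x‖) :=
              mul_le_mul_of_nonneg_left (hTb x) (pow_nonneg hCC n)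
          _ = (CA * CB) ^ (n + 1) * ‖x‖ := by ring
  -- adjoint in the other direction
  have hadj' : ∀ x y : D, (inner 𝕜 (j (B x)) (j y) : 𝕜) = inner 𝕜 (j x) (j (A y)) := by
    intro x y
    have := congrArg (starRingEnd 𝕜) (hadj y x)
    rwa [inner_conj_symm, inner_conj_symm, eq_comm] at this
  -- T is symmetric for the H-inner product
  have hsym : ∀ u v : D, (inner 𝕜 (j (T u)) (j v) : 𝕜) = inner 𝕜 (j u) (j (T v)) := by
    intro u v
    have h1 : (inner 𝕜 (j (B (A u))) (j v) : 𝕜) = inner 𝕜 (j (A u)) (j (A v)) := hadj' (A u) v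
    have h2 : (inner 𝕜 (j (A u)) (j (A v)) : 𝕜) = inner 𝕜 (j u) (j (B (A v))) := hadj u (A v)
    show (inner 𝕜 (j (B (A u))) (j v) : 𝕜) = inner 𝕜 (j u) (j (B (A v)))
    rw [h1, h2]
  have hshift : ∀ (n : ℕ) (u v : D),
      (inner 𝕜 (j ((T ^ n) u)) (j v) : 𝕜) = inner 𝕜 (j u) (j ((T ^ n) v)) := by
    intro n
    induction n with
    | zero => intro u v; simp
    | succ n ih =>
        intro u v
        have h1 : (T ^ (n + 1)) u = (T ^ n) (T u) := by rw [pow_succ]; rfl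
        have h2 : (T ^ (n + 1)) v = T ((T ^ n) v) := by rw [pow_succ']; rfl
        rw [h1, h2, ih (T u) v, hsym u ((T ^ n) v)]
  -- Cauchy–Schwarz squaring step
  have hsq : ∀ (n : ℕ) (x : D), ‖j ((T ^ n) x)‖ ^ 2 ≤ ‖j x‖ * ‖j ((T ^ (2 * n)) x)‖ := by
    intro n x
    have h1 : (inner 𝕜 (j ((T ^ n) x)) (j ((T ^ n) x)) : 𝕜)
        = inner 𝕜 (j x) (j ((T ^ (2 * n)) x)) := by
      rw [hshift n x ((T ^ n) x)]
      congr 2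
      rw [two_mul, pow_add]
      rfl
    have h2 : ‖j ((T ^ n) x)‖ ^ 2 = RCLike.re (inner 𝕜 (j ((T ^ n) x)) (j ((T ^ n) x)) : 𝕜) := by
      rw [inner_self_eq_norm_sq]
    rw [h2, h1]
    calc RCLike.re (inner 𝕜 (j x) (j ((T ^ (2 * n)) x)) : 𝕜)
        ≤ ‖(inner 𝕜 (j x) (j ((T ^ (2 * n)) x)) : 𝕜)‖ := RCLike.re_le_norm _
      _ ≤ ‖j x‖ * ‖j ((T ^ (2 * n)) x)‖ := norm_inner_le_norm _ _
  -- iterate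
  have hiter : ∀ (n : ℕ) (x : D),
      ‖j (T x)‖ ^ (2 ^ n) ≤ ‖j ((T ^ (2 ^ n)) x)‖ * ‖j x‖ ^ (2 ^ n - 1) := by
    intro n
    induction n with
    | zero => intro x; simpa using le_of_eq rfl
    | succ n ih =>
        intro x
        have hnn : (0:ℝ) ≤ ‖j ((T ^ (2 ^ n)) x)‖ * ‖j x‖ ^ (2 ^ n - 1) :=
          mul_nonneg (norm_nonneg _) (pow_nonneg (norm_nonneg _) _)
        have h1 : ‖j (T x)‖ ^ (2 ^ (n + 1)) = (‖j (T x)‖ ^ (2 ^ n)) ^ 2 := by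
          rw [← pow_mul, pow_succ, mul_comm (2 ^ n) 2, mul_comm]
        have h2 : (‖j (T x)‖ ^ (2 ^ n)) ^ 2
            ≤ (‖j ((T ^ (2 ^ n)) x)‖ * ‖j x‖ ^ (2 ^ n - 1)) ^ 2 :=
          pow_le_pow_left₀ (pow_nonneg (norm_nonneg _) _) (ih x) 2
        have h3 : ‖j ((T ^ (2 ^ n)) x)‖ ^ 2 ≤ ‖j x‖ * ‖j ((T ^ (2 ^ (n + 1))) x)‖ := by
          have := hsq (2 ^ n) x
          rwa [show 2 * 2 ^ n = 2 ^ (n + 1) by rw [pow_succ]; ring] at this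
        have hpow : 2 ^ (n + 1) - 1 = 2 * (2 ^ n - 1) + 1 := by
          have h4 : 1 ≤ 2 ^ n := Nat.one_le_two_pow
          omega
        calc ‖j (T x)‖ ^ (2 ^ (n + 1)) = (‖j (T x)‖ ^ (2 ^ n)) ^ 2 := h1
          _ ≤ (‖j ((T ^ (2 ^ n)) x)‖ * ‖j x‖ ^ (2 ^ n - 1)) ^ 2 := h2
          _ = ‖j ((T ^ (2 ^ n)) x)‖ ^ 2 * (‖j x‖ ^ (2 ^ n - 1)) ^ 2 := by ring
          _ ≤ (‖j x‖ * ‖j ((T ^ (2 ^ (n + 1))) x)‖) * (‖j x‖ ^ (2 ^ n - 1)) ^ 2 := by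
              exact mul_le_mul_of_nonneg_right h3 (pow_nonneg (pow_nonneg (norm_nonneg _) _) 2)
          _ = ‖j ((T ^ (2 ^ (n + 1))) x)‖ * ‖j x‖ ^ (2 ^ (n + 1) - 1) := by
              rw [hpow]
              ring
  -- H-norm bound for T
  have hTbound : ∀ x : D, ‖j (T x)‖ ≤ (CA * CB) * ‖j x‖ := by
    intro x
    by_contra hcon
    push_neg at hcon
    set a := ‖j (T x)‖ with ha_def
    set b := (CA * CB) * ‖j x‖ with hb_def
    have hb0 : 0 ≤ b := mul_nonneg hCC (norm_nonneg _)
    have ha0 : 0 < a := lt_of_le_of_lt hb0 hcon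
    set M : ℝ := C * ‖x‖ with hM_def
    have hM0 : 0 ≤ M := le_trans (norm_nonneg (j x)) (hj x)
    have bound : ∀ n : ℕ, a ^ (2 ^ n) ≤ (M * (CA * CB)) * b ^ (2 ^ n - 1) := by
      intro n
      have h1 : ‖j ((T ^ (2 ^ n)) x)‖ ≤ M * (CA * CB) ^ (2 ^ n) := by
        calc ‖j ((T ^ (2 ^ n)) x)‖ ≤ C * ‖(T ^ (2 ^ n)) x‖ := hj _
          _ ≤ C * ((CA * CB) ^ (2 ^ n) * ‖x‖) := by
              rcases le_or_gt C 0 with hC | hC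
              · calc C * ‖(T ^ (2 ^ n)) x‖ ≤ 0 :=
                    mul_nonpos_of_nonpos_of_nonneg hC (norm_nonneg _)
                  _ ≤ C * ((CA * CB) ^ (2 ^ n) * ‖x‖) := by
                    rcases le_or_gt 0 (C * ((CA * CB) ^ (2 ^ n) * ‖x‖)) with h | h
                    · exact h
                    · nlinarith [hj x, norm_nonneg (j x), norm_nonneg x,
                        pow_nonneg hCC (2 ^ n)]
              · exact mul_le_mul_of_nonneg_left (hTn (2 ^ n) x) hC.le
          _ = M * (CA * CB) ^ (2 ^ n) := by rw [hM_def]; ring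
      have h2 : (CA * CB) ^ (2 ^ n) * ‖j x‖ ^ (2 ^ n - 1)
          = (CA * CB) * b ^ (2 ^ n - 1) := by
        have h4 : (CA * CB) ^ (2 ^ n) = (CA * CB) * (CA * CB) ^ (2 ^ n - 1) := by
          rw [← pow_succ', Nat.sub_add_cancel Nat.one_le_two_pow]
        rw [h4, hb_def]; ring
      calc a ^ (2 ^ n) ≤ ‖j ((T ^ (2 ^ n)) x)‖ * ‖j x‖ ^ (2 ^ n - 1) := hiter n x
        _ ≤ (M * (CA * CB) ^ (2 ^ n)) * ‖j x‖ ^ (2 ^ n - 1) :=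
            mul_le_mul_of_nonneg_right h1 (pow_nonneg (norm_nonneg _) _)
        _ = M * ((CA * CB) ^ (2 ^ n) * ‖j x‖ ^ (2 ^ n - 1)) := by ring
        _ = (M * (CA * CB)) * b ^ (2 ^ n - 1) := by rw [h2]; ring
    rcases eq_or_lt_of_le hb0 with hb | hb
    · -- b = 0 : take n = 1
      have := bound 1
      rw [← hb] at this
      simp only [pow_one] at this
      have : a ^ 2 ≤ 0 := by simpa using this
      exact absurd this (not_le.mpr (pow_pos ha0 2))
    · -- b > 0
      set K := M * (CA * CB) with hK_def
      have hr : 1 < a / b := (one_lt_div hb).mpr hcon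
      obtain ⟨n, hn⟩ := pow_unbounded_of_one_lt (K / b) hr
      have h5 : (a / b) ^ n ≤ (a / b) ^ (2 ^ n) :=
        pow_le_pow_right₀ hr.le (Nat.lt_two_pow_self (n := n)).le
      have h6 : (a / b) ^ (2 ^ n) ≤ K / b := by
        rw [div_pow, div_le_div_iff₀ (pow_pos hb _) hb]
        calc a ^ (2 ^ n) * b ≤ (K * b ^ (2 ^ n - 1)) * b :=
            mul_le_mul_of_nonneg_right (bound n) hb.le
          _ = K * b ^ (2 ^ n) := by
              rw [mul_assoc, ← pow_succ, Nat.sub_add_cancel Nat.one_le_two_pow]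
      exact absurd (hn.trans_le (h5.trans h6)) (lt_irrefl _)
  -- conclude
  intro x
  have h1 : (inner 𝕜 (j (A x)) (j (A x)) : 𝕜) = inner 𝕜 (j x) (j (T x)) := hadj x (A x)
  have h2 : ‖j (A x)‖ ^ 2 ≤ (CA * CB) * ‖j x‖ ^ 2 := by
    calc ‖j (A x)‖ ^ 2 = RCLike.re (inner 𝕜 (j (A x)) (j (A x)) : 𝕜) := by
          rw [inner_self_eq_norm_sq]
      _ = RCLike.re (inner 𝕜 (j x) (j (T x)) : 𝕜) := by rw [h1]
      _ ≤ ‖(inner 𝕜 (j x) (j (T x)) : 𝕜)‖ := RCLike.re_le_norm _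
      _ ≤ ‖j x‖ * ‖j (T x)‖ := norm_inner_le_norm _ _
      _ ≤ ‖j x‖ * ((CA * CB) * ‖j x‖) :=
          mul_le_mul_of_nonneg_left (hTbound x) (norm_nonneg _)
      _ = (CA * CB) * ‖j x‖ ^ 2 := by ring
  have h3 : ‖j (A x)‖ = Real.sqrt (‖j (A x)‖ ^ 2) := (Real.sqrt_sq (norm_nonneg _)).symm
  rw [h3]
  calc Real.sqrt (‖j (A x)‖ ^ 2) ≤ Real.sqrt ((CA * CB) * ‖j x‖ ^ 2) := Real.sqrt_le_sqrt h2
    _ = Real.sqrt (CA * CB) * Real.sqrt (‖j x‖ ^ 2) := Real.sqrt_mul hCC _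
    _ = Real.sqrt (CA * CB) * ‖j x‖ := by rw [Real.sqrt_sq (norm_nonneg _)]

/-- Extension step of Krein's theorem. -/
lemma krein_ext {𝕜 H D : Type*} [RCLike 𝕜]
    [NormedAddCommGroup H] [InnerProductSpace 𝕜 H] [CompleteSpace H]
    [NormedAddCommGroup D] [NormedSpace 𝕜 D]
    (j : D →ₗ[𝕜] H) (hdense : DenseRange j) (A : D →ₗ[𝕜] D) (M : ℝ) (hM : 0 ≤ M)
    (hbound : ∀ x : D, ‖j (A x)‖ ≤ M * ‖j x‖) :
    ∃ A' : H →L[𝕜] H, ‖A'‖ ≤ M ∧ ∀ x : D, A' (j x) = j (A x) := by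
  set p : Submodule 𝕜 H := LinearMap.range j with hp
  set e : p →L[𝕜] H := p.subtypeL with he
  have hde : DenseRange e := by
    have hrange : Set.range (⇑e) = Set.range (⇑j) := by
      ext y
      constructor
      · rintro ⟨⟨y, hy⟩, rfl⟩
        exact LinearMap.mem_range.mp hy
      · rintro ⟨x, rfl⟩
        exact ⟨⟨j x, LinearMap.mem_range_self j x⟩, rfl⟩
    rw [DenseRange, hrange]
    exact hdense
  have hker : LinearMap.ker j ≤ LinearMap.ker (j ∘ₗ A) := by
    intro x hx
    rw [LinearMap.mem_ker] at hx ⊢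
    have := hbound x
    rw [LinearMap.comp_apply]
    rw [hx, norm_zero, mul_zero] at this
    exact norm_le_zero_iff.mp this
  set g : (D ⧸ LinearMap.ker j) →ₗ[𝕜] H := (LinearMap.ker j).liftQ (j ∘ₗ A) hker with hg
  set φ := (LinearMap.quotKerEquivRange j).symm with hφ
  set f0 : p →ₗ[𝕜] H := g ∘ₗ φ.toLinearMap with hf0
  have key : ∀ x : D, f0 ⟨j x, LinearMap.mem_range_self j x⟩ = j (A x) := by
    intro x
    have h1 : φ ⟨j x, LinearMap.mem_range_self j x⟩ = Submodule.Quotient.mk x := by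
      rw [hφ, LinearEquiv.symm_apply_eq]
      exact Subtype.ext (LinearMap.quotKerEquivRange_apply_mk j x).symm
    show g (φ ⟨j x, LinearMap.mem_range_self j x⟩) = j (A x)
    rw [h1, hg, Submodule.liftQ_apply, LinearMap.comp_apply]
  have bound0 : ∀ y : p, ‖f0 y‖ ≤ M * ‖y‖ := by
    rintro ⟨y, hy⟩
    obtain ⟨x, rfl⟩ := LinearMap.mem_range.mp hy
    have h1 : (⟨j x, hy⟩ : p) = ⟨j x, LinearMap.mem_range_self j x⟩ := rfl
    rw [h1, key x]
    exact hbound x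
  set fc : p →L[𝕜] H := f0.mkContinuous M bound0 with hfc
  have hnorm : ‖fc‖ ≤ M := LinearMap.mkContinuous_norm_le f0 hM bound0
  have h_e : ∀ y : p, ‖y‖ ≤ (1 : ℝ≥0) * ‖e y‖ := by
    intro y; simp [he]
  refine ⟨fc.extend e, ?_, ?_⟩
  · calc ‖fc.extend e‖ ≤ (1 : ℝ≥0) * ‖fc‖ :=
          ContinuousLinearMap.opNorm_extend_le fc hde h_e
      _ = ‖fc‖ := by norm_num
      _ ≤ M := hnorm
  · intro x
    have h2 : j x = e ⟨j x, LinearMap.mem_range_self j x⟩ := rfl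
    rw [h2, ContinuousLinearMap.extend_eq fc hde
      (ContinuousLinearMap.isUniformEmbedding_of_bound e h_e).isUniformInducing]
    exact key x

/-- M. Krein's theorem: if `D` is a Banach space continuously and densely embedded
(via `j`) in a Hilbert space `H`, and `A`, `B` are linear operators on `D`, bounded on
`D` with constants `C_A`, `C_B`, that are adjoint to each other with respect to the
inner product of `H`, then `‖Ax‖_H ≤ √(C_A C_B)‖x‖_H`, `‖Bx‖_H ≤ √(C_A C_B)‖x‖_H`
for `x ∈ D`, and `A` and `B` extend to bounded operators on `H` of norm at most
`√(C_A C_B)`. -/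
theorem krein_theorem {𝕜 H D : Type*} [RCLike 𝕜]
    [NormedAddCommGroup H] [InnerProductSpace 𝕜 H] [CompleteSpace H]
    [NormedAddCommGroup D] [NormedSpace 𝕜 D] [CompleteSpace D]
    (j : D →ₗ[𝕜] H) (C : ℝ) (hj : ∀ x : D, ‖j x‖ ≤ C * ‖x‖) (hdense : DenseRange j)
    (A B : D →ₗ[𝕜] D) (CA CB : ℝ) (hCA : 0 ≤ CA) (hCB : 0 ≤ CB)
    (hA : ∀ x : D, ‖A x‖ ≤ CA * ‖x‖) (hB : ∀ x : D, ‖B x‖ ≤ CB * ‖x‖)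
    (hadj : ∀ x y : D, (inner 𝕜 (j (A x)) (j y) : 𝕜) = inner 𝕜 (j x) (j (B y))) :
    (∀ x : D, ‖j (A x)‖ ≤ Real.sqrt (CA * CB) * ‖j x‖) ∧
    (∀ x : D, ‖j (B x)‖ ≤ Real.sqrt (CA * CB) * ‖j x‖) ∧
    (∃ A' : H →L[𝕜] H, ‖A'‖ ≤ Real.sqrt (CA * CB) ∧ ∀ x : D, A' (j x) = j (A x)) ∧
    (∃ B' : H →L[𝕜] H, ‖B'‖ ≤ Real.sqrt (CA * CB) ∧ ∀ x : D, B' (j x) = j (B x)) := by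
  have hadj' : ∀ x y : D, (inner 𝕜 (j (B x)) (j y) : 𝕜) = inner 𝕜 (j x) (j (A y)) := by
    intro x y
    have := congrArg (starRingEnd 𝕜) (hadj y x)
    rwa [inner_conj_symm, inner_conj_symm, eq_comm] at this
  have hAbd := krein_aux j C hj A B CA CB hCA hCB hA hB hadj
  have hBbd' := krein_aux j C hj B A CB CA hCB hCA hB hA hadj'
  have hBbd : ∀ x : D, ‖j (B x)‖ ≤ Real.sqrt (CA * CB) * ‖j x‖ := by
    intro x
    have := hBbd' x
    rwa [mul_comm CB CA] at this
  have hM : (0:ℝ) ≤ Real.sqrt (CA * CB) := Real.sqrt_nonneg _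
  exact ⟨hAbd, hBbd, krein_ext j hdense A _ hM hAbd, krein_ext j hdense B _ hM hBbd⟩
end
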